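/- Let 𝒳, 𝒴 be finite sets, μ a probability distribution on 𝒳 × 𝒴, and n > m ≥ 1 integers with C = {m+1, …, n}. Consider the probability space in which (X_1, Y_1), …, (X_n, Y_n) are i.i.d. with common distribution μ, and D_1, …, D_m are i.i.d. uniform bits independent of all the (X_i, Y_i). For i ∈ {1,…,m}, set M_i = X_i if D_i = 0 and M_i = Y_i if D_i = 1, and Ω_i = (D_i, M_i). Let Ω = (Ω_1, …, Ω_m, X_C, Y_C), where X_C = (X_i)_{i∈C} and Y_C = (Y_i)_{i∈C}. Then X_{[n]} = (X_1,…,X_n) and Y_{[n]} = (Y_1,…,Y_n) are conditionally independent given Ω: for every value ω with P(Ω = ω) > 0 and all x ∈ 𝒳^n, y ∈ 𝒴^n, P(X_{[n]} = x, Y_{[n]} = y | Ω = ω) = P(X_{[n]} = x | Ω = ω) · P(Y_{[n]} = y | Ω = ω). -/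

import Mathlib

/-- The outcome space: the `n` question pairs together with the `m` coin flips `D_i`. -/
abbrev Stmt3.Outc (𝒳 𝒴 : Type) (n m : ℕ) : Type :=
  (Fin n → 𝒳 × 𝒴) × (Fin m → Bool)

/-- The probability of an outcome: the questions are i.i.d. `μ` and the bits are uniform. -/
noncomputable def Stmt3.prob {𝒳 𝒴 : Type} [Fintype 𝒳] [Fintype 𝒴]
    {n m : ℕ} (μ : 𝒳 × 𝒴 → ℝ) (o : Stmt3.Outc 𝒳 𝒴 n m) : ℝ :=
  (∏ i, μ (o.1 i)) * (1 / 2) ^ m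

/-- The value of the dependency-breaking variable
`Ω = (Ω_1, …, Ω_m, X_C, Y_C)` where `Ω_i = (D_i, M_i)`, `M_i = X_i` if `D_i = 0`
(encoded `false`) and `M_i = Y_i` if `D_i = 1` (encoded `true`), and
`C = {m+1, …, n}` is encoded as the indices `i : Fin n` with `m ≤ i`. -/
def Stmt3.Om {𝒳 𝒴 : Type} {n m : ℕ} (hmn : m < n) (o : Stmt3.Outc 𝒳 𝒴 n m) :
    (Fin m → Bool × (𝒳 ⊕ 𝒴)) × ({i : Fin n // m ≤ (i : ℕ)} → 𝒳 × 𝒴) :=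
  (fun i => (o.2 i,
      if o.2 i then Sum.inr (o.1 (Fin.castLE hmn.le i)).2
      else Sum.inl (o.1 (Fin.castLE hmn.le i)).1),
   fun i => o.1 i.1)

namespace Stmt3Aux

variable {𝒳 𝒴 : Type} {n m : ℕ}

/-- The swap condition: index `i` is below `m` and both coin flips are `false`. -/
def sw (a b : Stmt3.Outc 𝒳 𝒴 n m) (i : Fin n) : Prop :=
  ∃ h : (i : ℕ) < m, a.2 ⟨i, h⟩ = false ∧ b.2 ⟨i, h⟩ = false

lemma sw_symm {a b : Stmt3.Outc 𝒳 𝒴 n m} {i : Fin n} (h : sw a b i) : sw b a i := by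
  obtain ⟨h, h1, h2⟩ := h; exact ⟨h, h2, h1⟩

open Classical in
/-- Recombination: take `a`, but at swap coordinates take `b`'s question pair. -/
noncomputable def mix (a b : Stmt3.Outc 𝒳 𝒴 n m) : Stmt3.Outc 𝒳 𝒴 n m :=
  (fun i => if sw a b i then b.1 i else a.1 i, a.2)

open Classical

@[simp] lemma mix_snd (a b : Stmt3.Outc 𝒳 𝒴 n m) : (mix a b).2 = a.2 := rfl

lemma mix_fst_of_sw {a b : Stmt3.Outc 𝒳 𝒴 n m} {i : Fin n} (h : sw a b i) :
    (mix a b).1 i = b.1 i := if_pos h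

lemma mix_fst_of_not_sw {a b : Stmt3.Outc 𝒳 𝒴 n m} {i : Fin n} (h : ¬ sw a b i) :
    (mix a b).1 i = a.1 i := if_neg h

lemma sw_mix_iff {a b : Stmt3.Outc 𝒳 𝒴 n m} {i : Fin n} :
    sw (mix a b) (mix b a) i ↔ sw a b i := Iff.rfl

lemma mix_mix (a b : Stmt3.Outc 𝒳 𝒴 n m) : mix (mix a b) (mix b a) = a := by
  refine Prod.ext_iff.mpr ⟨funext fun i => ?_, rfl⟩
  by_cases h : sw a b i
  · rw [mix_fst_of_sw (sw_mix_iff.mpr h), mix_fst_of_sw (sw_symm h)]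
  · rw [mix_fst_of_not_sw (fun hh => h (sw_mix_iff.mp hh)), mix_fst_of_not_sw h]

/-- unpacking of `Om o = ω`. -/
lemma unpack (hmn : m < n) {o : Stmt3.Outc 𝒳 𝒴 n m}
    {ω : (Fin m → Bool × (𝒳 ⊕ 𝒴)) × ({i : Fin n // m ≤ (i : ℕ)} → 𝒳 × 𝒴)}
    (h : Stmt3.Om hmn o = ω) :
    (∀ j : Fin m, o.2 j = (ω.1 j).1) ∧
    (∀ j : Fin m, (ω.1 j).1 = false →
      Sum.inl ((o.1 (Fin.castLE hmn.le j)).1) = (ω.1 j).2) ∧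
    (∀ j : Fin m, (ω.1 j).1 = true →
      Sum.inr ((o.1 (Fin.castLE hmn.le j)).2) = (ω.1 j).2) ∧
    (∀ i : Fin n, ∀ hi : m ≤ (i : ℕ), o.1 i = ω.2 ⟨i, hi⟩) := by
  have h1 := congrArg Prod.fst h
  have h2 := congrArg Prod.snd h
  simp only [Stmt3.Om] at h1 h2
  have hbit : ∀ j : Fin m, o.2 j = (ω.1 j).1 := fun j =>
    congrArg Prod.fst (congrFun h1 j)
  refine ⟨hbit, fun j hj => ?_, fun j hj => ?_, fun i hi => congrFun h2 ⟨i, hi⟩⟩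
  · have := congrArg Prod.snd (congrFun h1 j)
    simp only at this
    rw [← this, if_neg (by rw [hbit j, hj]; simp)]
  · have := congrArg Prod.snd (congrFun h1 j)
    simp only at this
    rw [← this, if_pos (by rw [hbit j, hj])]

end Stmt3Aux

open Stmt3Aux in
/-- Conditioned on `Ω`, the question tuples `X_{[n]}` and `Y_{[n]}` are independent. -/
theorem stmt3 (𝒳 𝒴 : Type) [Fintype 𝒳] [DecidableEq 𝒳] [Fintype 𝒴] [DecidableEq 𝒴]
    (μ : 𝒳 × 𝒴 → ℝ) (hμ0 : ∀ p, 0 ≤ μ p) (hμ1 : ∑ p, μ p = 1)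
    (n m : ℕ) (hm : 1 ≤ m) (hmn : m < n)
    (ω : (Fin m → Bool × (𝒳 ⊕ 𝒴)) × ({i : Fin n // m ≤ (i : ℕ)} → 𝒳 × 𝒴))
    (hω : 0 < ∑ o : Stmt3.Outc 𝒳 𝒴 n m,
      if Stmt3.Om hmn o = ω then Stmt3.prob μ o else 0)
    (x : Fin n → 𝒳) (y : Fin n → 𝒴) :
    (∑ o : Stmt3.Outc 𝒳 𝒴 n m,
        if (fun i => (o.1 i).1) = x ∧ (fun i => (o.1 i).2) = y ∧ Stmt3.Om hmn o = ω
        then Stmt3.prob μ o else 0) /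
      (∑ o : Stmt3.Outc 𝒳 𝒴 n m, if Stmt3.Om hmn o = ω then Stmt3.prob μ o else 0)
    = ((∑ o : Stmt3.Outc 𝒳 𝒴 n m,
          if (fun i => (o.1 i).1) = x ∧ Stmt3.Om hmn o = ω then Stmt3.prob μ o else 0) /
        (∑ o : Stmt3.Outc 𝒳 𝒴 n m, if Stmt3.Om hmn o = ω then Stmt3.prob μ o else 0)) *
      ((∑ o : Stmt3.Outc 𝒳 𝒴 n m,
          if (fun i => (o.1 i).2) = y ∧ Stmt3.Om hmn o = ω then Stmt3.prob μ o else 0) /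
        (∑ o : Stmt3.Outc 𝒳 𝒴 n m, if Stmt3.Om hmn o = ω then Stmt3.prob μ o else 0)) := by
  classical
  -- `Om` is preserved by mixing
  have hOm : ∀ a b : Stmt3.Outc 𝒳 𝒴 n m, Stmt3.Om hmn a = ω → Stmt3.Om hmn b = ω →
      Stmt3.Om hmn (mix a b) = ω := by
    intro a b ha hb
    obtain ⟨ha1, ha2, ha3, ha4⟩ := unpack hmn ha
    obtain ⟨hb1, hb2, hb3, hb4⟩ := unpack hmn hb
    unfold Stmt3.Om
    refine Prod.ext_iff.mpr ⟨funext fun j => ?_, funext fun i => ?_⟩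
    · refine Prod.ext_iff.mpr ⟨ha1 j, ?_⟩
      simp only [mix_snd]
      by_cases hja : a.2 j = true
      · have hwj : (ω.1 j).1 = true := by rw [← ha1 j]; exact hja
        have hs : ¬ sw a b (Fin.castLE hmn.le j) := by
          rintro ⟨h, h1, h2⟩
          have he : (⟨((Fin.castLE hmn.le j) : ℕ), h⟩ : Fin m) = j := rfl
          rw [he, hja] at h1
          simp at h1
        simp only [hja, ↓reduceIte]
        rw [mix_fst_of_not_sw hs]
        exact ha3 j hwj
      · have hja' : a.2 j = false := by simpa using hja
        have hwj : (ω.1 j).1 = false := by rw [← ha1 j]; exact hja'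
        simp only [hja', Bool.false_eq_true, ↓reduceIte]
        by_cases hs : sw a b (Fin.castLE hmn.le j)
        · rw [mix_fst_of_sw hs]
          exact hb2 j hwj
        · rw [mix_fst_of_not_sw hs]
          exact ha2 j hwj
    · have hs : ¬ sw a b i.1 := by
        rintro ⟨h, -, -⟩
        have := i.2
        omega
      show (mix a b).1 i.1 = ω.2 i
      exact (mix_fst_of_not_sw hs).trans (ha4 i.1 i.2)
  -- `X = x` is preserved by mixing, given both have `Om = ω`
  have hX : ∀ a b : Stmt3.Outc 𝒳 𝒴 n m, Stmt3.Om hmn a = ω → Stmt3.Om hmn b = ω →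
      (fun i => (a.1 i).1) = x → (fun i => ((mix a b).1 i).1) = x := by
    intro a b ha hb hax
    obtain ⟨ha1, ha2, ha3, ha4⟩ := unpack hmn ha
    obtain ⟨hb1, hb2, hb3, hb4⟩ := unpack hmn hb
    funext i
    by_cases hs : sw a b i
    · show ((mix a b).1 i).1 = x i
      rw [mix_fst_of_sw hs]
      obtain ⟨h, h1, h2⟩ := hs
      have hwj : (ω.1 (⟨(i : ℕ), h⟩ : Fin m)).1 = false := (ha1 _).symm.trans h1
      have e1 := ha2 (⟨(i : ℕ), h⟩ : Fin m) hwj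
      have e2 := hb2 (⟨(i : ℕ), h⟩ : Fin m) hwj
      have hba : (b.1 (Fin.castLE hmn.le ⟨(i : ℕ), h⟩)).1
          = (a.1 (Fin.castLE hmn.le ⟨(i : ℕ), h⟩)).1 := Sum.inl.inj (e2.trans e1.symm)
      exact hba.trans (congrFun hax i)
    · show ((mix a b).1 i).1 = x i
      rw [mix_fst_of_not_sw hs]
      exact congrFun hax i
  -- `Y = y` is preserved: `mix a b` has the `Y`-values of `b`
  have hY : ∀ a b : Stmt3.Outc 𝒳 𝒴 n m, Stmt3.Om hmn a = ω → Stmt3.Om hmn b = ω →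
      (fun i => (b.1 i).2) = y → (fun i => ((mix a b).1 i).2) = y := by
    intro a b ha hb hby
    obtain ⟨ha1, ha2, ha3, ha4⟩ := unpack hmn ha
    obtain ⟨hb1, hb2, hb3, hb4⟩ := unpack hmn hb
    funext i
    by_cases hs : sw a b i
    · show ((mix a b).1 i).2 = y i
      rw [mix_fst_of_sw hs]
      exact congrFun hby i
    · show ((mix a b).1 i).2 = y i
      rw [mix_fst_of_not_sw hs]
      by_cases h : (i : ℕ) < m
      · have hbits : a.2 ⟨(i : ℕ), h⟩ = b.2 ⟨(i : ℕ), h⟩ := by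
          rw [ha1 ⟨(i : ℕ), h⟩, hb1 ⟨(i : ℕ), h⟩]
        have htrue : a.2 ⟨(i : ℕ), h⟩ = true := by
          by_contra hc
          have hfa : a.2 ⟨(i : ℕ), h⟩ = false := by simpa using hc
          exact hs ⟨h, hfa, by rw [← hbits]; exact hfa⟩
        have hwj : (ω.1 (⟨(i : ℕ), h⟩ : Fin m)).1 = true := (ha1 _).symm.trans htrue
        have e1 := ha3 (⟨(i : ℕ), h⟩ : Fin m) hwj
        have e2 := hb3 (⟨(i : ℕ), h⟩ : Fin m) hwj
        have hab : (a.1 (Fin.castLE hmn.le ⟨(i : ℕ), h⟩)).2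
            = (b.1 (Fin.castLE hmn.le ⟨(i : ℕ), h⟩)).2 := Sum.inr.inj (e1.trans e2.symm)
        exact hab.trans (congrFun hby i)
      · have hi : m ≤ (i : ℕ) := le_of_not_gt h
        have hab : a.1 i = b.1 i := (ha4 i hi).trans (hb4 i hi).symm
        exact (congrArg Prod.snd hab).trans (congrFun hby i)
  -- weight preservation
  have hw : ∀ a b : Stmt3.Outc 𝒳 𝒴 n m,
      Stmt3.prob μ (mix a b) * Stmt3.prob μ (mix b a)
        = Stmt3.prob μ a * Stmt3.prob μ b := by
    intro a b
    unfold Stmt3.prob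
    have hprod : (∏ i, μ ((mix a b).1 i)) * (∏ i, μ ((mix b a).1 i))
        = (∏ i, μ (a.1 i)) * (∏ i, μ (b.1 i)) := by
      rw [← Finset.prod_mul_distrib, ← Finset.prod_mul_distrib]
      refine Finset.prod_congr rfl fun i _ => ?_
      by_cases hs : sw a b i
      · rw [mix_fst_of_sw hs, mix_fst_of_sw (sw_symm hs)]
        ring
      · rw [mix_fst_of_not_sw hs, mix_fst_of_not_sw (fun h => hs (sw_symm h))]
    calc (∏ i, μ ((mix a b).1 i)) * (1/2 : ℝ) ^ m * ((∏ i, μ ((mix b a).1 i)) * (1/2) ^ m)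
        = (∏ i, μ ((mix a b).1 i)) * (∏ i, μ ((mix b a).1 i)) * ((1/2) ^ m * (1/2) ^ m) := by
          ring
      _ = (∏ i, μ (a.1 i)) * (∏ i, μ (b.1 i)) * ((1/2) ^ m * (1/2) ^ m) := by rw [hprod]
      _ = (∏ i, μ (a.1 i)) * (1/2) ^ m * ((∏ i, μ (b.1 i)) * (1/2) ^ m) := by ring
  -- the involution
  have hinv : Function.Involutive
      (fun p : Stmt3.Outc 𝒳 𝒴 n m × Stmt3.Outc 𝒳 𝒴 n m => (mix p.1 p.2, mix p.2 p.1)) := by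
    intro p
    simp only [mix_mix]
  set σ := fun p : Stmt3.Outc 𝒳 𝒴 n m × Stmt3.Outc 𝒳 𝒴 n m => (mix p.1 p.2, mix p.2 p.1)
    with hσdef
  -- the key recombination identity
  have key :
      (∑ o : Stmt3.Outc 𝒳 𝒴 n m,
        if (fun i => (o.1 i).1) = x ∧ (fun i => (o.1 i).2) = y ∧ Stmt3.Om hmn o = ω
        then Stmt3.prob μ o else 0) *
      (∑ o : Stmt3.Outc 𝒳 𝒴 n m, if Stmt3.Om hmn o = ω then Stmt3.prob μ o else 0)
      = (∑ o : Stmt3.Outc 𝒳 𝒴 n m,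
          if (fun i => (o.1 i).1) = x ∧ Stmt3.Om hmn o = ω then Stmt3.prob μ o else 0) *
        (∑ o : Stmt3.Outc 𝒳 𝒴 n m,
          if (fun i => (o.1 i).2) = y ∧ Stmt3.Om hmn o = ω then Stmt3.prob μ o else 0) := by
    have expand : ∀ F G : Stmt3.Outc 𝒳 𝒴 n m → ℝ,
        (∑ o : Stmt3.Outc 𝒳 𝒴 n m, F o) * (∑ o : Stmt3.Outc 𝒳 𝒴 n m, G o)
          = ∑ p : Stmt3.Outc 𝒳 𝒴 n m × Stmt3.Outc 𝒳 𝒴 n m, F p.1 * G p.2 := by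
      intro F G
      rw [Finset.sum_mul_sum]
      exact (Fintype.sum_prod_type (f := fun p : Stmt3.Outc 𝒳 𝒴 n m × Stmt3.Outc 𝒳 𝒴 n m => F p.1 * G p.2)).symm
    rw [expand, expand]
    refine Fintype.sum_equiv (hinv.toPerm σ) _ _ fun p => ?_
    have hperm : (hinv.toPerm σ) p = σ p := rfl
    rw [hperm]
    rw [ite_zero_mul_ite_zero, ite_zero_mul_ite_zero]
    have hiff :
        (((fun i => (p.1.1 i).1) = x ∧ (fun i => (p.1.1 i).2) = y ∧ Stmt3.Om hmn p.1 = ω) ∧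
          Stmt3.Om hmn p.2 = ω)
        ↔ (((fun i => ((σ p).1.1 i).1) = x ∧ Stmt3.Om hmn (σ p).1 = ω) ∧
          ((fun i => ((σ p).2.1 i).2) = y ∧ Stmt3.Om hmn (σ p).2 = ω)) := by
      constructor
      · rintro ⟨⟨hx1, hy1, ho1⟩, ho2⟩
        exact ⟨⟨hX p.1 p.2 ho1 ho2 hx1, hOm p.1 p.2 ho1 ho2⟩,
               ⟨hY p.2 p.1 ho2 ho1 hy1, hOm p.2 p.1 ho2 ho1⟩⟩
      · rintro ⟨⟨hx1, ho1⟩, ⟨hy2, ho2⟩⟩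
        have h1 : (fun i => ((mix (σ p).1 (σ p).2).1 i).1) = x :=
          hX (σ p).1 (σ p).2 ho1 ho2 hx1
        have h2 : (fun i => ((mix (σ p).1 (σ p).2).1 i).2) = y :=
          hY (σ p).1 (σ p).2 ho1 ho2 hy2
        have h3 : Stmt3.Om hmn (mix (σ p).1 (σ p).2) = ω := hOm (σ p).1 (σ p).2 ho1 ho2
        have h4 : Stmt3.Om hmn (mix (σ p).2 (σ p).1) = ω := hOm (σ p).2 (σ p).1 ho2 ho1
        have hfix : σ (σ p) = p := hinv p
        have hfix1 : mix (σ p).1 (σ p).2 = p.1 := congrArg Prod.fst hfix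
        have hfix2 : mix (σ p).2 (σ p).1 = p.2 := congrArg Prod.snd hfix
        rw [hfix1] at h1 h2 h3
        rw [hfix2] at h4
        exact ⟨⟨h1, h2, h3⟩, h4⟩
    rw [if_congr hiff (hw p.1 p.2).symm rfl]
  -- conclude
  have hS0 : (∑ o : Stmt3.Outc 𝒳 𝒴 n m,
      if Stmt3.Om hmn o = ω then Stmt3.prob μ o else 0) ≠ 0 := ne_of_gt hω
  rw [div_mul_div_comm, div_eq_div_iff hS0 (mul_ne_zero hS0 hS0), ← mul_assoc, key]
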